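/- In the binomial model price system construction of Theorem 3, the resulting processes (ρ⁰(k), ρ¹(k))_{k=0}^T satisfy: (PS1) ρ⁰(k, ω^k) = p ρ⁰(k+1, (ω^k, u)) + (1-p) ρ⁰(k+1, (ω^k, d)) and likewise for ρ¹, and (PS2) (1-λ₁) P¹_k ≤ ρ¹(k)/ρ⁰(k) ≤ (1+λ₀) P¹_k for all k; hence (ρ⁰(T), ρ¹(T)) is a price system. -/
import Mathlib

lemma flip_involutive (T : ℕ) (j : Fin T) :
    Function.Involutive (fun ω : Fin T → Bool => Function.update ω j (!ω j)) := by
  intro ω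
  funext i
  rcases eq_or_ne i j with rfl | h
  · simp
  · simp [Function.update_of_ne h]

lemma sum_update_pair (T : ℕ) (j : Fin T) (f : (Fin T → Bool) → ℝ) :
    ∑ ω : Fin T → Bool,
      (f (Function.update ω j true) + f (Function.update ω j false))
      = 2 * ∑ ω : Fin T → Bool, f ω := by
  have h1 : ∀ ω : Fin T → Bool,
      f (Function.update ω j true) + f (Function.update ω j false)
        = f ω + f ((flip_involutive T j).toPerm _ ω) := by
    intro ω
    have hself : Function.update ω j (ω j) = ω := Function.update_eq_self j ω
    cases hω : ω j with
    | true =>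
        have h2 : Function.update ω j true = ω := by rw [← hω]; exact hself
        simp only [Function.Involutive.coe_toPerm, hω, h2, Bool.not_true]
    | false =>
        have h2 : Function.update ω j false = ω := by rw [← hω]; exact hself
        simp only [Function.Involutive.coe_toPerm, hω, h2, Bool.not_false]
        ring
  calc ∑ ω : Fin T → Bool,
      (f (Function.update ω j true) + f (Function.update ω j false))
      = ∑ ω : Fin T → Bool, (f ω + f ((flip_involutive T j).toPerm _ ω)) := by
        exact Finset.sum_congr rfl fun ω _ => h1 ω
    _ = (∑ ω : Fin T → Bool, f ω) + ∑ ω : Fin T → Bool, f ((flip_involutive T j).toPerm _ ω) :=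
        Finset.sum_add_distrib
    _ = 2 * ∑ ω : Fin T → Bool, f ω := by
        rw [Equiv.sum_comp ((flip_involutive T j).toPerm _) f]; ring

theorem stmt12 (T : ℕ) (p u d lam0 lam1 P10 : ℝ)
    (hp : 0 < p) (hp1 : p < 1) (hd : 0 < d) (hd1 : d < 1) (hu : 1 < u)
    (hlam0 : 0 < lam0) (hlam1 : 0 < lam1) (hP10 : 0 < P10)
    (S : ℕ → (Fin T → Bool) → ℝ)
    (hS : ∀ k ω, S k ω
      = P10 * ∏ i : Fin T, if (i : ℕ) < k then (if ω i then u else d) else 1)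
    (A Au Ad ρ0 ρ1 : ℕ → (Fin T → Bool) → ℝ)
    (hAmeas : ∀ k (ω ω' : Fin T → Bool),
      (∀ i : Fin T, (i : ℕ) < k → ω i = ω' i) → A k ω = A k ω')
    (hAumeas : ∀ k (ω ω' : Fin T → Bool),
      (∀ i : Fin T, (i : ℕ) < k → ω i = ω' i) → Au k ω = Au k ω')
    (hAdmeas : ∀ k (ω ω' : Fin T → Bool),
      (∀ i : Fin T, (i : ℕ) < k → ω i = ω' i) → Ad k ω = Ad k ω')
    (hρ0meas : ∀ k (ω ω' : Fin T → Bool),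
      (∀ i : Fin T, (i : ℕ) < k → ω i = ω' i) → ρ0 k ω = ρ0 k ω')
    (hρ00 : ∀ ω, ρ0 0 ω = 1)
    (hA0 : ∀ ω, (1 - lam1) * P10 ≤ A 0 ω ∧ A 0 ω ≤ (1 + lam0) * P10)
    (hρ1 : ∀ k ω, ρ1 k ω = ρ0 k ω * A k ω)
    (hcon1 : ∀ k, k < T → ∀ ω,
      min (Au k ω) (Ad k ω) < A k ω ∧ A k ω < max (Au k ω) (Ad k ω))
    (hcon2 : ∀ k, k < T → ∀ ω,
      (1 - lam1) * S k ω * u ≤ Au k ω ∧ Au k ω ≤ (1 + lam0) * S k ω * u)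
    (hcon3 : ∀ k, k < T → ∀ ω,
      (1 - lam1) * S k ω * d ≤ Ad k ω ∧ Ad k ω ≤ (1 + lam0) * S k ω * d)
    (hrec0 : ∀ k, ∀ hk : k < T, ∀ ω,
      ρ0 (k + 1) ω = if ω ⟨k, hk⟩
        then ρ0 k ω * ((1 / p) * ((A k ω - Ad k ω) / (Au k ω - Ad k ω)))
        else ρ0 k ω * ((1 / (1 - p)) * ((Au k ω - A k ω) / (Au k ω - Ad k ω))))
    (hrecA : ∀ k, ∀ hk : k < T, ∀ ω,
      A (k + 1) ω = if ω ⟨k, hk⟩ then Au k ω else Ad k ω) :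
    (∀ k, ∀ hk : k < T, ∀ ω : Fin T → Bool,
      ρ0 k ω = p * ρ0 (k + 1) (Function.update ω ⟨k, hk⟩ true)
             + (1 - p) * ρ0 (k + 1) (Function.update ω ⟨k, hk⟩ false) ∧
      ρ1 k ω = p * ρ1 (k + 1) (Function.update ω ⟨k, hk⟩ true)
             + (1 - p) * ρ1 (k + 1) (Function.update ω ⟨k, hk⟩ false)) ∧
    (∀ k, k ≤ T → ∀ ω, (1 - lam1) * S k ω ≤ ρ1 k ω / ρ0 k ω ∧
      ρ1 k ω / ρ0 k ω ≤ (1 + lam0) * S k ω) ∧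
    (∑ ω : Fin T → Bool, (∏ i : Fin T, if ω i then p else 1 - p) * ρ0 T ω) = 1 := by
  have hq : (0:ℝ) < 1 - p := by linarith
  -- update at coordinate k preserves coordinates < k
  have hupd : ∀ k (hk : k < T) (b : Bool) (ω : Fin T → Bool) (i : Fin T),
      (i : ℕ) < k → Function.update ω ⟨k, hk⟩ b i = ω i := by
    intro k hk b ω i hi
    apply Function.update_of_ne
    intro h
    rw [h] at hi
    simp at hi
  -- denominator nonzero
  have hD : ∀ k, k < T → ∀ ω, Au k ω - Ad k ω ≠ 0 := by
    intro k hk ω h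
    obtain ⟨h1, h2⟩ := hcon1 k hk ω
    have he : Au k ω = Ad k ω := by linarith
    simp only [he, min_self, max_self] at h1 h2
    linarith
  -- positivity of the two fractions
  have hXpos : ∀ k, k < T → ∀ ω,
      0 < (A k ω - Ad k ω) / (Au k ω - Ad k ω) ∧
      0 < (Au k ω - A k ω) / (Au k ω - Ad k ω) := by
    intro k hk ω
    obtain ⟨h1, h2⟩ := hcon1 k hk ω
    rcases lt_trichotomy (Ad k ω) (Au k ω) with h | h | h
    · rw [min_eq_right h.le] at h1
      rw [max_eq_left h.le] at h2
      exact ⟨div_pos (by linarith) (by linarith), div_pos (by linarith) (by linarith)⟩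
    · exact absurd (by rw [h]; ring) (hD k hk ω)
    · rw [min_eq_left h.le] at h1
      rw [max_eq_right h.le] at h2
      exact ⟨div_pos_iff.mpr (Or.inr ⟨by linarith, by linarith⟩),
        div_pos_iff.mpr (Or.inr ⟨by linarith, by linarith⟩)⟩
  -- positivity of ρ0
  have hρpos : ∀ k, k ≤ T → ∀ ω, 0 < ρ0 k ω := by
    intro k
    induction k with
    | zero => intro _ ω; rw [hρ00]; norm_num
    | succ n ih =>
        intro hn ω
        have hnT : n < T := hn
        obtain ⟨hX, hY⟩ := hXpos n hnT ω
        have hρ := ih hnT.le ω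
        rw [hrec0 n hnT ω]
        split_ifs
        · exact mul_pos hρ (mul_pos (by positivity) hX)
        · exact mul_pos hρ (mul_pos (by positivity) hY)
  -- step for S
  have hSstep : ∀ k (hk : k < T) (ω : Fin T → Bool),
      S (k + 1) ω = S k ω * (if ω ⟨k, hk⟩ then u else d) := by
    intro k hk ω
    rw [hS (k + 1) ω, hS k ω]
    have hf : (fun i : Fin T => if (i : ℕ) < k + 1 then (if ω i then u else d) else 1)
        = Function.update (fun i : Fin T => if (i : ℕ) < k then (if ω i then u else d) else 1)
            ⟨k, hk⟩ (if ω ⟨k, hk⟩ then u else d) := by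
      funext i
      rcases eq_or_ne i ⟨k, hk⟩ with rfl | h
      · simp
      · rw [Function.update_of_ne h]
        have : (i : ℕ) ≠ k := fun hik => h (Fin.ext hik)
        have : ((i : ℕ) < k + 1) ↔ ((i : ℕ) < k) := by omega
        rw [if_congr this rfl rfl]
    rw [hf, Finset.prod_update_of_mem (Finset.mem_univ _),
      ← Finset.mul_prod_erase Finset.univ _ (Finset.mem_univ (⟨k, hk⟩ : Fin T)),
      Finset.sdiff_singleton_eq_erase]
    have h1 : (if ((⟨k, hk⟩ : Fin T) : ℕ) < k then (if ω ⟨k, hk⟩ then u else d) else 1) = 1 := by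
      simp
    rw [h1]
    ring
  -- bounds on A
  have hAbd : ∀ k, k ≤ T → ∀ ω, (1 - lam1) * S k ω ≤ A k ω ∧ A k ω ≤ (1 + lam0) * S k ω := by
    intro k
    induction k with
    | zero =>
        intro _ ω
        have : S 0 ω = P10 := by rw [hS]; simp
        rw [this]
        exact hA0 ω
    | succ n _ =>
        intro hn ω
        have hnT : n < T := hn
        rw [hrecA n hnT ω, hSstep n hnT ω]
        cases hb : ω ⟨n, hnT⟩
        · simp only [hb, if_false, Bool.false_eq_true]
          refine ⟨?_, ?_⟩ <;> rw [← mul_assoc]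
          · exact (hcon3 n hnT ω).1
          · exact (hcon3 n hnT ω).2
        · simp only [hb, if_true]
          refine ⟨?_, ?_⟩ <;> rw [← mul_assoc]
          · exact (hcon2 n hnT ω).1
          · exact (hcon2 n hnT ω).2
  -- the two one-step values of ρ0
  have hval_t : ∀ k (hk : k < T) (ω : Fin T → Bool),
      ρ0 (k + 1) (Function.update ω ⟨k, hk⟩ true)
        = ρ0 k ω * ((1 / p) * ((A k ω - Ad k ω) / (Au k ω - Ad k ω))) := by
    intro k hk ω
    rw [hrec0 k hk _]
    rw [if_pos (by simp : (Function.update ω ⟨k, hk⟩ true) ⟨k, hk⟩ = true)]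
    rw [hρ0meas k _ ω (hupd k hk true ω), hAmeas k _ ω (hupd k hk true ω),
      hAumeas k _ ω (hupd k hk true ω), hAdmeas k _ ω (hupd k hk true ω)]
  have hval_f : ∀ k (hk : k < T) (ω : Fin T → Bool),
      ρ0 (k + 1) (Function.update ω ⟨k, hk⟩ false)
        = ρ0 k ω * ((1 / (1 - p)) * ((Au k ω - A k ω) / (Au k ω - Ad k ω))) := by
    intro k hk ω
    rw [hrec0 k hk _]
    rw [if_neg (by simp : ¬((Function.update ω ⟨k, hk⟩ false) ⟨k, hk⟩ = true))]
    rw [hρ0meas k _ ω (hupd k hk false ω), hAmeas k _ ω (hupd k hk false ω),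
      hAumeas k _ ω (hupd k hk false ω), hAdmeas k _ ω (hupd k hk false ω)]
  have hAval_t : ∀ k (hk : k < T) (ω : Fin T → Bool),
      A (k + 1) (Function.update ω ⟨k, hk⟩ true) = Au k ω := by
    intro k hk ω
    rw [hrecA k hk _]
    rw [if_pos (by simp : (Function.update ω ⟨k, hk⟩ true) ⟨k, hk⟩ = true)]
    exact hAumeas k _ ω (hupd k hk true ω)
  have hAval_f : ∀ k (hk : k < T) (ω : Fin T → Bool),
      A (k + 1) (Function.update ω ⟨k, hk⟩ false) = Ad k ω := by
    intro k hk ω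
    rw [hrecA k hk _]
    rw [if_neg (by simp : ¬((Function.update ω ⟨k, hk⟩ false) ⟨k, hk⟩ = true))]
    exact hAdmeas k _ ω (hupd k hk false ω)
  -- (PS1)
  have PS1 : ∀ k, ∀ hk : k < T, ∀ ω : Fin T → Bool,
      ρ0 k ω = p * ρ0 (k + 1) (Function.update ω ⟨k, hk⟩ true)
             + (1 - p) * ρ0 (k + 1) (Function.update ω ⟨k, hk⟩ false) ∧
      ρ1 k ω = p * ρ1 (k + 1) (Function.update ω ⟨k, hk⟩ true)
             + (1 - p) * ρ1 (k + 1) (Function.update ω ⟨k, hk⟩ false) := by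
    intro k hk ω
    have hDk := hD k hk ω
    constructor
    · rw [hval_t k hk ω, hval_f k hk ω]
      field_simp
      ring
    · rw [hρ1, hρ1, hρ1, hval_t k hk ω, hval_f k hk ω, hAval_t k hk ω, hAval_f k hk ω]
      field_simp
      ring
  refine ⟨PS1, ?_, ?_⟩
  · -- (PS2)
    intro k hk ω
    have h := hAbd k hk ω
    have hρ := hρpos k hk ω
    rw [hρ1, mul_div_cancel_left₀ _ hρ.ne']
    exact h
  · -- sum equals one
    have hW1 : ∑ ω : Fin T → Bool, (∏ i : Fin T, if ω i then p else 1 - p) = 1 := by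
      rw [← Fintype.piFinset_univ,
        ← Finset.prod_univ_sum (fun _ : Fin T => (Finset.univ : Finset Bool))
          (fun _ b => if b then p else 1 - p)]
      have h1 : ∀ i : Fin T, i ∈ Finset.univ →
          (∑ b : Bool, if b then p else 1 - p) = 1 := by
        intro i _; simp
      rw [Finset.prod_congr rfl h1, Finset.prod_const_one]
    have hstep : ∀ k, k < T →
        (∑ ω : Fin T → Bool, (∏ i : Fin T, if ω i then p else 1 - p) * ρ0 (k + 1) ω)
          = ∑ ω : Fin T → Bool, (∏ i : Fin T, if ω i then p else 1 - p) * ρ0 k ω := by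
      intro k hk
      set j : Fin T := ⟨k, hk⟩ with hj
      have hWsplit : ∀ (b : Bool) (ω : Fin T → Bool),
          (∏ i : Fin T, if Function.update ω j b i then p else 1 - p)
            = (if b then p else 1 - p)
              * ∏ i ∈ Finset.univ.erase j, (if ω i then p else 1 - p) := by
        intro b ω
        have hfun : (fun i : Fin T => if Function.update ω j b i then p else 1 - p)
            = Function.update (fun i : Fin T => if ω i then p else 1 - p) j
                (if b then p else 1 - p) := by
          funext i
          rcases eq_or_ne i j with rfl | h
          · simp
          · rw [Function.update_of_ne h, Function.update_of_ne h]
        rw [hfun, Finset.prod_update_of_mem (Finset.mem_univ _),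
          Finset.sdiff_singleton_eq_erase]
      have h2l := sum_update_pair T j
        (fun ω => (∏ i : Fin T, if ω i then p else 1 - p) * ρ0 (k + 1) ω)
      have h2r := sum_update_pair T j
        (fun ω => (∏ i : Fin T, if ω i then p else 1 - p) * ρ0 k ω)
      have hsummand : ∀ ω : Fin T → Bool,
          ((∏ i : Fin T, if Function.update ω j true i then p else 1 - p)
              * ρ0 (k + 1) (Function.update ω j true)
            + (∏ i : Fin T, if Function.update ω j false i then p else 1 - p)
              * ρ0 (k + 1) (Function.update ω j false))
          = ((∏ i : Fin T, if Function.update ω j true i then p else 1 - p)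
              * ρ0 k (Function.update ω j true)
            + (∏ i : Fin T, if Function.update ω j false i then p else 1 - p)
              * ρ0 k (Function.update ω j false)) := by
        intro ω
        rw [hWsplit true ω, hWsplit false ω]
        rw [hρ0meas k _ ω (hupd k hk true ω), hρ0meas k _ ω (hupd k hk false ω)]
        have hps := (PS1 k hk ω).1
        set W := ∏ i ∈ Finset.univ.erase j, (if ω i then p else 1 - p)
        simp only [if_true, if_false]
        calc p * W * ρ0 (k + 1) (Function.update ω j true)
              + (1 - p) * W * ρ0 (k + 1) (Function.update ω j false)
            = W * (p * ρ0 (k + 1) (Function.update ω j true)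
              + (1 - p) * ρ0 (k + 1) (Function.update ω j false)) := by ring
          _ = W * ρ0 k ω := by rw [← hps]
          _ = p * W * ρ0 k ω + (1 - p) * W * ρ0 k ω := by ring
      have h2 : (2:ℝ) * (∑ ω : Fin T → Bool, (∏ i : Fin T, if ω i then p else 1 - p) * ρ0 (k + 1) ω)
          = 2 * ∑ ω : Fin T → Bool, (∏ i : Fin T, if ω i then p else 1 - p) * ρ0 k ω := by
        rw [← h2l, ← h2r]
        exact Finset.sum_congr rfl fun ω _ => hsummand ω
      linarith
    have hfin : ∀ k, k ≤ T →
        (∑ ω : Fin T → Bool, (∏ i : Fin T, if ω i then p else 1 - p) * ρ0 k ω) = 1 := by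
      intro k
      induction k with
      | zero =>
          intro _
          simp only [hρ00, mul_one]
          exact hW1
      | succ n ih =>
          intro hn
          rw [hstep n hn]
          exact ih (Nat.le_of_succ_le hn)
    exact hfin T le_rfl
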